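/- Strict inequality between the logarithmic moment generating functions: if c is a bounded measurable nonnegative function on 𝕋 that is not ℓ-a.e. constant on 𝕋₁ (where ℓ(𝕋₁) = 1/3), then for every θ > 0 one has ∫_{𝕋₁} e^{θc(x)} dx + 2/3 − 3∫_{𝕋₁} e^{θc(x)/3} dx > 0; equivalently, Λ(θ/3) < Λ̄(θ) for all θ > 0. -/

import Mathlib

open MeasureTheory Filter Asymptotics

noncomputable section

namespace LoadOpt

/-- `j = e^{2iπ/3}`, primitive cube root of unity. -/
def jc : ℂ := Complex.exp (2 * Real.pi * Complex.I / 3)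

/-- `λ = 2 (3√3)^{-1/2}`. -/
def lam : ℝ := 2 / Real.sqrt (3 * Real.sqrt 3)

/-- The bins `B₁, B₂, B₃` (indexed by `0, 1, 2`). -/
def Bin : Fin 3 → ℂ := ![jc ^ 2 * (lam * Complex.I), (lam : ℂ) * Complex.I, jc * (lam * Complex.I)]

/-- The triangle `𝕋`, convex hull of the three bins. -/
def Tri : Set ℂ := convexHull ℝ {Bin 0, Bin 1, Bin 2}

/-- Cost functions `c₁, c₂, c₃` (indexed by `0, 1, 2`). -/
def costs (c : ℂ → ℝ) : Fin 3 → ℂ → ℝ := ![c, fun x => c (jc ^ 2 * x), fun x => c (jc * x)]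

/-- Half-lines removed to make the Voronoi cells a partition: `D₁ = {ijt : t < 0}`,
`D_l = {ij^l t : t ≤ 0}` for `l = 2, 3`. -/
def Dl : Fin 3 → Set ℂ :=
  ![{z | ∃ t : ℝ, t < 0 ∧ z = Complex.I * jc * t},
    {z | ∃ t : ℝ, t ≤ 0 ∧ z = Complex.I * jc ^ 2 * t},
    {z | ∃ t : ℝ, t ≤ 0 ∧ z = Complex.I * jc ^ 3 * t}]

/-- The Voronoi cells `𝕋₁, 𝕋₂, 𝕋₃` (indexed by `0, 1, 2`). -/
def cell (l : Fin 3) : Set ℂ :=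
  {x ∈ Tri | dist x (Bin l) = ⨅ m : Fin 3, dist x (Bin m)} \ Dl l

/-- The load `ρₙ(A)` of the allocation `A` of the points `x 0, …, x (n-1)`. -/
def load (c : ℂ → ℝ) {n : ℕ} (x : Fin n → ℂ) (A : Fin n → Fin 3) : ℝ :=
  Finset.univ.sup' Finset.univ_nonempty fun l => ∑ k, if A k = l then costs c l (x k) else 0

/-- The optimal load `ρₙ`. -/
def optLoad (c : ℂ → ℝ) {n : ℕ} (x : Fin n → ℂ) : ℝ :=
  Finset.univ.inf' Finset.univ_nonempty fun A : Fin n → Fin 3 => load c x A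

/-- The suboptimal load `ρ̄ₙ`, allocating each point to the bin of its Voronoi cell. -/
def subLoad (c : ℂ → ℝ) {n : ℕ} (x : Fin n → ℂ) : ℝ :=
  Finset.univ.sup' Finset.univ_nonempty fun l => ∑ k, (cell l).indicator (costs c l) (x k)

/-- `γ = ∫_{𝕋₁} c`. -/
def gamma (c : ℂ → ℝ) : ℝ := ∫ x in cell 0, c x

/-- Assumption (C1). -/
def C1 (c : ℂ → ℝ) : Prop :=
  ∀ x ∈ Tri, ∀ l : Fin 3, l ≠ 0 → dist x (Bin 0) < dist x (Bin l) → costs c 0 x < costs c l x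

/-- Assumption (C2): symmetry of `c` w.r.t. the line through `0` and `B₁`, plus a Lipschitz
property near `D₁ ∪ D₃`. -/
def C2 (c : ℂ → ℝ) : Prop :=
  (∀ θ ∈ Set.Icc (0 : ℝ) (2 * Real.pi), ∀ t : ℝ, 0 < t →
      (t : ℂ) * Complex.exp ((θ : ℂ) * Complex.I) ∈ Tri →
      c ((t : ℂ) * Complex.exp ((θ : ℂ) * Complex.I))
        = c ((t : ℂ) * Complex.exp (((-θ - Real.pi / 3 : ℝ) : ℂ) * Complex.I))) ∧
  ∃ (K : NNReal) (U : Set ℂ), IsOpen U ∧ Dl 0 ∪ Dl 2 ⊆ U ∧ LipschitzOnWith K c U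

/-- `Λ(θ) = log (3 ∫_{𝕋₁} e^{θ c})`. -/
def Lambda (c : ℂ → ℝ) (θ : ℝ) : ℝ := Real.log (3 * ∫ x in cell 0, Real.exp (θ * c x))

/-- The Fenchel–Legendre transform `Λ*`. -/
def LambdaStar (c : ℂ → ℝ) (y : ℝ) : EReal := ⨆ θ : ℝ, ((θ * y - Lambda c θ : ℝ) : EReal)

/-- `Λ̄(θ) = log (∫_{𝕋₁} e^{θ c} + 2/3)`. -/
def LambdaBar (c : ℂ → ℝ) (θ : ℝ) : ℝ :=
  Real.log ((∫ x in cell 0, Real.exp (θ * c x)) + 2 / 3)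

/-- The Fenchel–Legendre transform `Λ̄*`. -/
def LambdaBarStar (c : ℂ → ℝ) (y : ℝ) : EReal := ⨆ θ : ℝ, ((θ * y - LambdaBar c θ : ℝ) : EReal)

/-- Assumption (C5): `c(B₁) < c(x) < c(0)` on `𝕋₁ \ {0, B₁}`. -/
def C5 (c : ℂ → ℝ) : Prop :=
  ∀ x ∈ cell 0, x ≠ 0 → x ≠ Bin 0 → c (Bin 0) < c x ∧ c x < c 0

/-! ### Auxiliary lemmas -/

open scoped ENNReal

lemma sqrt3_nonneg : (0:ℝ) ≤ Real.sqrt 3 := Real.sqrt_nonneg 3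

lemma sqrt3_sq : Real.sqrt 3 * Real.sqrt 3 = 3 := Real.mul_self_sqrt (by norm_num)

lemma sqrt3_pos : (0:ℝ) < Real.sqrt 3 := Real.sqrt_pos.2 (by norm_num)

lemma lam_pos : 0 < lam := by
  have h : 0 < Real.sqrt (3 * Real.sqrt 3) := Real.sqrt_pos.2 (by positivity)
  exact div_pos two_pos h

lemma lam_sq : lam * lam = 4 / (3 * Real.sqrt 3) := by
  have h : (0:ℝ) ≤ 3 * Real.sqrt 3 := by positivity
  rw [lam, div_mul_div_comm, Real.mul_self_sqrt h]; norm_num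

lemma jc_arg : (2 * (Real.pi:ℂ) * Complex.I / 3) = ((2*Real.pi/3 : ℝ) : ℂ) * Complex.I := by
  push_cast; ring

lemma jc_re_im : jc.re = -(1/2) ∧ jc.im = Real.sqrt 3 / 2 := by
  have hc : Real.cos (2*Real.pi/3) = -(1/2) := by
    rw [show 2*Real.pi/3 = Real.pi - Real.pi/3 by ring, Real.cos_pi_sub, Real.cos_pi_div_three]
  have hs : Real.sin (2*Real.pi/3) = Real.sqrt 3 / 2 := by
    rw [show 2*Real.pi/3 = Real.pi - Real.pi/3 by ring, Real.sin_pi_sub, Real.sin_pi_div_three]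
  rw [jc, jc_arg]
  constructor
  · rw [Complex.exp_ofReal_mul_I_re, hc]
  · rw [Complex.exp_ofReal_mul_I_im, hs]

lemma jc_cube : jc ^ 3 = 1 := by
  rw [jc, ← Complex.exp_nat_mul,
    show ((3:ℕ):ℂ) * (2 * (Real.pi:ℂ) * Complex.I / 3) = 2 * (Real.pi:ℂ) * Complex.I by
      push_cast; ring,
    Complex.exp_two_pi_mul_I]

lemma abs_jc : ‖jc‖ = 1 := by
  rw [jc, Complex.norm_exp, jc_arg]
  simp

lemma jcsq_re_im : (jc^2).re = -(1/2) ∧ (jc^2).im = -(Real.sqrt 3/2) := by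
  obtain ⟨h1, h2⟩ := jc_re_im
  constructor <;> simp [pow_two, Complex.mul_re, Complex.mul_im, h1, h2] <;>
    nlinarith [sqrt3_sq]

lemma bin0_def : Bin 0 = jc^2 * ((lam:ℂ) * Complex.I) := rfl
lemma bin1_def : Bin 1 = (lam:ℂ) * Complex.I := rfl
lemma bin2_def : Bin 2 = jc * ((lam:ℂ) * Complex.I) := rfl

lemma bin_coords :
    (Bin 0).re = Real.sqrt 3 * lam / 2 ∧ (Bin 0).im = -(lam/2) ∧
    (Bin 1).re = 0 ∧ (Bin 1).im = lam ∧
    (Bin 2).re = -(Real.sqrt 3 * lam / 2) ∧ (Bin 2).im = -(lam/2) := by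
  obtain ⟨h1, h2⟩ := jc_re_im; obtain ⟨h3, h4⟩ := jcsq_re_im
  refine ⟨?_, ?_, ?_, ?_, ?_, ?_⟩ <;>
    simp [bin0_def, bin1_def, bin2_def, Complex.mul_re, Complex.mul_im, h1, h2, h3, h4] <;>
    ring

lemma bin_ne : Bin 0 ≠ Bin 1 ∧ Bin 0 ≠ Bin 2 ∧ Bin 1 ≠ Bin 2 := by
  obtain ⟨e1, e2, e3, e4, e5, e6⟩ := bin_coords
  have hl := lam_pos
  have hs := sqrt3_pos
  refine ⟨fun h => ?_, fun h => ?_, fun h => ?_⟩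
  · have := congrArg Complex.im h; rw [e2, e4] at this; linarith
  · have := congrArg Complex.re h; rw [e1, e5] at this; nlinarith
  · have := congrArg Complex.im h; rw [e4, e6] at this; linarith

lemma jc_mul_bin : ∀ l : Fin 3, jc * Bin l = Bin (l + 1) := by
  intro l
  fin_cases l
  · show jc * Bin 0 = Bin 1
    rw [bin0_def, bin1_def, show jc * (jc^2 * ((lam:ℂ) * Complex.I)) =
      jc^3 * ((lam:ℂ) * Complex.I) by ring, jc_cube, one_mul]
  · show jc * Bin 1 = Bin 2
    rw [bin1_def, bin2_def]
  · show jc * Bin 2 = Bin 0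
    rw [bin2_def, bin0_def]; ring

lemma mul_jc_mem_Tri {x : ℂ} (hx : x ∈ Tri) : jc * x ∈ Tri := by
  have himg : jc * x ∈ (fun y : ℂ => jc * y) '' (convexHull ℝ {Bin 0, Bin 1, Bin 2}) :=
    ⟨x, hx, rfl⟩
  have hmap : (fun y : ℂ => jc * y) '' (convexHull ℝ {Bin 0, Bin 1, Bin 2})
      = convexHull ℝ ((fun y : ℂ => jc * y) '' {Bin 0, Bin 1, Bin 2}) := by
    exact ((LinearMap.mulLeft ℝ jc).image_convexHull _)
  rw [hmap] at himg
  refine convexHull_mono ?_ himg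
  intro z hz
  simp only [Set.image_insert_eq, Set.image_singleton, Set.mem_insert_iff,
    Set.mem_singleton_iff] at hz
  rcases hz with rfl | rfl | rfl <;>
    simp [jc_mul_bin 0, jc_mul_bin 1, jc_mul_bin 2, Tri, Set.mem_insert_iff]

lemma mul_jc_mem_Tri_iff {x : ℂ} : jc * x ∈ Tri ↔ x ∈ Tri := by
  refine ⟨fun h => ?_, mul_jc_mem_Tri⟩
  have := mul_jc_mem_Tri (mul_jc_mem_Tri h)
  rwa [show jc * (jc * (jc * x)) = jc^3 * x by ring, jc_cube, one_mul] at this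

lemma dist_jc (x y : ℂ) : dist (jc * x) (jc * y) = dist x y := by
  rw [Complex.dist_eq, Complex.dist_eq, ← mul_sub, norm_mul, abs_jc, one_mul]

/-- Closed Voronoi cells. -/
def Scell (l : Fin 3) : Set ℂ :=
  Tri ∩ ⋂ m : Fin 3, {x | dist x (Bin l) ≤ dist x (Bin m)}

lemma measurableSet_Tri : MeasurableSet Tri := by
  have : ({Bin 0, Bin 1, Bin 2} : Set ℂ).Finite := (Set.finite_singleton _).insert _ |>.insert _
  exact (this.isCompact_convexHull ℝ).isClosed.measurableSet

lemma measurableSet_Scell (l : Fin 3) : MeasurableSet (Scell l) :=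
  measurableSet_Tri.inter (MeasurableSet.iInter fun m =>
    (isClosed_le (continuous_id.dist continuous_const)
      (continuous_id.dist continuous_const)).measurableSet)

lemma Scell_subset_Tri (l : Fin 3) : Scell l ⊆ Tri := Set.inter_subset_left

lemma cell_subset_Tri : cell 0 ⊆ Tri := fun x hx => hx.1.1

lemma cell_zero_subset_Scell : cell 0 ⊆ Scell 0 := by
  rintro x ⟨⟨hxT, hxd⟩, -⟩
  refine ⟨hxT, Set.mem_iInter.2 fun m => ?_⟩
  simp only [Set.mem_setOf_eq]
  rw [hxd]
  exact ciInf_le (Set.finite_range _).bddBelow m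

lemma preimage_Scell (l : Fin 3) :
    (fun x : ℂ => jc * x) ⁻¹' Scell (l + 1) = Scell l := by
  have hd : ∀ (y : ℂ) (m : Fin 3), dist (jc * y) (Bin (m+1)) = dist y (Bin m) := by
    intro y m; rw [← jc_mul_bin m, dist_jc]
  ext x
  simp only [Scell, Set.mem_preimage, Set.mem_inter_iff, Set.mem_iInter, Set.mem_setOf_eq]
  constructor
  · rintro ⟨hT, hle⟩
    refine ⟨mul_jc_mem_Tri_iff.1 hT, fun m => ?_⟩
    have h := hle (m + 1)
    rwa [hd x l, hd x m] at h
  · rintro ⟨hT, hle⟩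
    refine ⟨mul_jc_mem_Tri hT, fun m => ?_⟩
    have hm : m = (m + 2) + 1 := by
      rw [add_assoc, show ((2:Fin 3) + 1) = 0 from rfl, add_zero]
    rw [hm, hd x (m+2), hd x l]
    exact hle (m + 2)

lemma Scell_inter_null {l m : Fin 3} (h : Bin l ≠ Bin m) :
    volume (Scell l ∩ Scell m) = 0 := by
  refine measure_mono_null ?_
    (Measure.addHaar_affineSubspace volume (AffineSubspace.perpBisector (Bin l) (Bin m)) ?_)
  · rintro x ⟨⟨-, h1⟩, -, h2⟩
    rw [Set.mem_iInter] at h1 h2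
    exact (AffineSubspace.mem_perpBisector_iff_dist_eq).2 (le_antisymm (h1 m) (h2 l))
  · intro htop
    have hmem : Bin l ∈ AffineSubspace.perpBisector (Bin l) (Bin m) := by
      rw [htop]; trivial
    rw [AffineSubspace.mem_perpBisector_iff_dist_eq, dist_self] at hmem
    exact h (eq_of_dist_eq_zero hmem.symm)

/-- The rotation by `jc` as a linear isometry equivalence. -/
def rotJc : ℂ ≃ₗᵢ[ℝ] ℂ := rotation (Circle.exp (2 * Real.pi / 3))

lemma rotJc_apply (z : ℂ) : rotJc z = jc * z := by
  have : (↑(Circle.exp (2 * Real.pi / 3)) : ℂ) = jc := by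
    rw [Circle.coe_exp, jc, jc_arg]
  simp [rotJc, rotation_apply, this]

lemma vol_Scell_rot (l : Fin 3) : volume (Scell l) = volume (Scell (l+1)) := by
  have h := rotJc.measurePreserving.measure_preimage
    (measurableSet_Scell (l+1)).nullMeasurableSet
  rwa [show (⇑rotJc : ℂ → ℂ) ⁻¹' Scell (l+1) = Scell l from by
    rw [show (⇑rotJc : ℂ → ℂ) = fun x => jc * x from funext rotJc_apply, preimage_Scell]] at h

lemma vol_Tri_le_one : volume Tri ≤ 1 := by
  have hs0 := sqrt3_nonneg
  have hsp := sqrt3_pos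
  have hl0 := lam_pos
  set s3 := Real.sqrt 3 with hs3
  set a := s3 * lam / 2 with ha
  have ha0 : 0 ≤ a := by positivity
  set K : Set (ℝ × ℝ) := {p | |p.1| ≤ a ∧ -(lam/2) ≤ p.2 ∧ s3 * |p.1| + p.2 ≤ lam} with hK
  have hKmeas : MeasurableSet K := by
    have hc : IsClosed K := by
      have h1 : IsClosed {p : ℝ×ℝ | |p.1| ≤ a} := isClosed_le continuous_fst.abs continuous_const
      have h2 : IsClosed {p : ℝ×ℝ | -(lam/2) ≤ p.2} := isClosed_le continuous_const continuous_snd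
      have h3 : IsClosed {p : ℝ×ℝ | s3 * |p.1| + p.2 ≤ lam} :=
        isClosed_le ((continuous_const.mul continuous_fst.abs).add continuous_snd)
          continuous_const
      have : K = {p : ℝ×ℝ | |p.1| ≤ a} ∩ ({p : ℝ×ℝ | -(lam/2) ≤ p.2} ∩
          {p : ℝ×ℝ | s3 * |p.1| + p.2 ≤ lam}) := by
        ext p; simp only [hK, Set.mem_setOf_eq, Set.mem_inter_iff]
      rw [this]; exact h1.inter (h2.inter h3)
    exact hc.measurableSet
  set Kc : Set ℂ := {z : ℂ | |z.re| ≤ a ∧ -(lam/2) ≤ z.im ∧ s3 * |z.re| + z.im ≤ lam} with hKc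
  have hpre : Kc = Complex.measurableEquivRealProd ⁻¹' K := by
    ext z
    simp only [hKc, hK, Set.mem_setOf_eq, Set.mem_preimage,
      Complex.measurableEquivRealProd_apply]
  have hconv : Convex ℝ Kc := by
    intro x hx y hy α β hα hβ hαβ
    obtain ⟨hx1, hx2, hx3⟩ := hx; obtain ⟨hy1, hy2, hy3⟩ := hy
    have hre : (α • x + β • y).re = α * x.re + β * y.re := by
      simp [Complex.real_smul, Complex.add_re, Complex.mul_re]
    have him : (α • x + β • y).im = α * x.im + β * y.im := by
      simp [Complex.real_smul, Complex.add_im, Complex.mul_im]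
    have habs : |α * x.re + β * y.re| ≤ α * |x.re| + β * |y.re| := by
      calc |α * x.re + β * y.re| ≤ |α * x.re| + |β * y.re| := abs_add_le _ _
        _ = α * |x.re| + β * |y.re| := by
            rw [abs_mul, abs_mul, abs_of_nonneg hα, abs_of_nonneg hβ]
    have h2 : s3 * |α * x.re + β * y.re| ≤ s3 * (α * |x.re| + β * |y.re|) :=
      mul_le_mul_of_nonneg_left habs hs0
    refine ⟨?_, ?_, ?_⟩
    · rw [hre]
      nlinarith [mul_le_mul_of_nonneg_left hx1 hα, mul_le_mul_of_nonneg_left hy1 hβ]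
    · rw [him]; nlinarith [mul_le_mul_of_nonneg_left hx2 hα, mul_le_mul_of_nonneg_left hy2 hβ]
    · rw [hre, him]
      nlinarith [mul_le_mul_of_nonneg_left hx3 hα, mul_le_mul_of_nonneg_left hy3 hβ,
        mul_le_mul_of_nonneg_left (mul_le_mul_of_nonneg_left hx1 hα) hs0]
  have hsub : Tri ⊆ Kc := by
    rw [Tri]
    refine convexHull_min ?_ hconv
    obtain ⟨e1, e2, e3, e4, e5, e6⟩ := bin_coords
    intro z hz
    rcases hz with rfl | rfl | rfl
    · refine ⟨?_, ?_, ?_⟩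
      · rw [e1, abs_of_nonneg (by positivity)]
      · rw [e2]
      · rw [e1, e2, abs_of_nonneg (by positivity)]
        nlinarith [sqrt3_sq]
    · refine ⟨?_, ?_, ?_⟩
      · rw [e3]; simpa using ha0
      · rw [e4]; linarith
      · rw [e3, e4]; simp
    · refine ⟨?_, ?_, ?_⟩
      · rw [e5, abs_neg, abs_of_nonneg (by positivity)]
      · rw [e6]
      · rw [e5, e6, abs_neg, abs_of_nonneg (by positivity)]
        nlinarith [sqrt3_sq]
  have hvolK : volume K = 1 := by
    rw [Measure.volume_eq_prod, Measure.prod_apply hKmeas]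
    have hslice : ∀ x : ℝ, volume (Prod.mk x ⁻¹' K) =
        Set.indicator (Set.Icc (-a) a)
          (fun x => ENNReal.ofReal (lam - s3*|x| + lam/2)) x := by
      intro x
      by_cases hx : x ∈ Set.Icc (-a) a
      · have hxa : |x| ≤ a := abs_le.2 ⟨hx.1, hx.2⟩
        have hset : Prod.mk x ⁻¹' K = Set.Icc (-(lam/2)) (lam - s3*|x|) := by
          ext y
          simp only [hK, Set.mem_preimage, Set.mem_setOf_eq, Set.mem_Icc]
          constructor
          · rintro ⟨-, h1, h2⟩; exact ⟨h1, by linarith⟩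
          · rintro ⟨h1, h2⟩; exact ⟨hxa, h1, by linarith⟩
        rw [hset, Real.volume_Icc, Set.indicator_of_mem hx]
        congr 1; ring
      · have hxa : ¬ |x| ≤ a := by
          rw [abs_le]; intro h; exact hx ⟨h.1, h.2⟩
        have hset : Prod.mk x ⁻¹' K = ∅ := by
          ext y
          simp only [hK, Set.mem_preimage, Set.mem_setOf_eq, Set.mem_empty_iff_false,
            iff_false]
          rintro ⟨h1, -⟩; exact hxa h1
        rw [hset, Set.indicator_of_notMem hx]; simp
    rw [lintegral_congr hslice, lintegral_indicator measurableSet_Icc]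
    have hcont : Continuous fun x : ℝ => lam - s3*|x| + lam/2 :=
      (continuous_const.sub (continuous_const.mul continuous_abs)).add continuous_const
    have hint : IntegrableOn (fun x : ℝ => lam - s3*|x| + lam/2) (Set.Icc (-a) a) :=
      hcont.integrableOn_Icc
    have hnn : 0 ≤ᵐ[volume.restrict (Set.Icc (-a) a)]
        fun x : ℝ => lam - s3*|x| + lam/2 := by
      filter_upwards [ae_restrict_mem measurableSet_Icc] with x hx
      have hxa : |x| ≤ a := abs_le.2 ⟨hx.1, hx.2⟩
      have h5 : s3 * |x| ≤ s3 * a := mul_le_mul_of_nonneg_left hxa hs0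
      have h6 : s3 * a = 3 * lam / 2 := by
        rw [ha]; linear_combination (lam/2) * sqrt3_sq
      simp only [Pi.zero_apply]
      linarith
    rw [← MeasureTheory.ofReal_integral_eq_lintegral_ofReal hint hnn]
    have h4 : 3 * s3 * (lam * lam) = 4 := by
      rw [lam_sq]; field_simp; exact hs3
    have hreal : ∫ x in Set.Icc (-a) a, (lam - s3*|x| + lam/2) = 1 := by
      rw [MeasureTheory.integral_Icc_eq_integral_Ioc,
        ← intervalIntegral.integral_of_le (by linarith : -a ≤ a)]
      have habsint : ∫ x in (-a)..a, |x| = a^2 := by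
        have h1 : ∫ x in (0:ℝ)..a, |x| = a^2/2 := by
          have heq : Set.EqOn (fun x : ℝ => |x|) (fun x => x) (Set.uIcc 0 a) := by
            intro x hx
            rw [Set.uIcc_of_le ha0] at hx
            exact abs_of_nonneg hx.1
          rw [intervalIntegral.integral_congr heq, integral_id]
          ring
        have h2 : ∫ x in (-a)..(0:ℝ), |x| = a^2/2 := by
          have heq : Set.EqOn (fun x : ℝ => |x|) (fun x => -x) (Set.uIcc (-a) 0) := by
            intro x hx
            rw [Set.uIcc_of_le (by linarith : -a ≤ 0)] at hx
            exact abs_of_nonpos hx.2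
          rw [intervalIntegral.integral_congr heq, intervalIntegral.integral_neg,
            integral_id]
          ring
        rw [← intervalIntegral.integral_add_adjacent_intervals (b := (0:ℝ))
          (continuous_abs.intervalIntegrable _ _) (continuous_abs.intervalIntegrable _ _),
          h1, h2]
        ring
      have hfg : (fun x : ℝ => lam - s3*|x| + lam/2) = fun x => (3/2*lam) - s3*|x| := by
        funext x; ring
      rw [hfg, intervalIntegral.integral_sub intervalIntegrable_const
        ((continuous_abs.intervalIntegrable _ _).const_mul s3),
        intervalIntegral.integral_const, intervalIntegral.integral_const_mul, habsint,
        smul_eq_mul, ha]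
      linear_combination (1/4 : ℝ) * h4 - (s3 * lam * lam / 4) * sqrt3_sq
    rw [hreal, ENNReal.ofReal_one]
  calc volume Tri ≤ volume Kc := measure_mono hsub
    _ = volume K := by
        rw [hpre]
        exact Complex.volume_preserving_equiv_real_prod.measure_preimage
          hKmeas.nullMeasurableSet
    _ = 1 := hvolK

lemma vol_Scell_le : volume (Scell 0) ≤ 1/3 := by
  obtain ⟨h01, h02, h12⟩ := bin_ne
  have e1 : volume (Scell 0 ∪ Scell 1) + volume (Scell 0 ∩ Scell 1)
      = volume (Scell 0) + volume (Scell 1) :=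
    measure_union_add_inter _ (measurableSet_Scell 1)
  rw [Scell_inter_null h01, add_zero] at e1
  have hnull2 : volume ((Scell 0 ∪ Scell 1) ∩ Scell 2) = 0 := by
    have hsub : (Scell 0 ∪ Scell 1) ∩ Scell 2 ⊆ (Scell 0 ∩ Scell 2) ∪ (Scell 1 ∩ Scell 2) := by
      rintro x ⟨hx | hx, hx2⟩
      · exact Or.inl ⟨hx, hx2⟩
      · exact Or.inr ⟨hx, hx2⟩
    exact measure_mono_null hsub
      (measure_union_null (Scell_inter_null h02) (Scell_inter_null h12))
  have e2 : volume ((Scell 0 ∪ Scell 1) ∪ Scell 2) + volume ((Scell 0 ∪ Scell 1) ∩ Scell 2)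
      = volume (Scell 0 ∪ Scell 1) + volume (Scell 2) :=
    measure_union_add_inter _ (measurableSet_Scell 2)
  rw [hnull2, add_zero, e1] at e2
  have hv1 : volume (Scell 0) = volume (Scell 1) := vol_Scell_rot 0
  have hv2 : volume (Scell 1) = volume (Scell 2) := vol_Scell_rot 1
  have hle : volume ((Scell 0 ∪ Scell 1) ∪ Scell 2) ≤ 1 := by
    refine le_trans (measure_mono ?_) vol_Tri_le_one
    exact Set.union_subset (Set.union_subset (Scell_subset_Tri 0) (Scell_subset_Tri 1))
      (Scell_subset_Tri 2)
  rw [e2, ← hv1, ← hv2, ← hv1] at hle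
  have h3 : volume (Scell 0) * 3 ≤ 1 := by
    have : volume (Scell 0) * 3 = volume (Scell 0) + volume (Scell 0) + volume (Scell 0) := by
      ring
    rw [this]; exact hle
  rwa [ENNReal.le_div_iff_mul_le (by norm_num) (by norm_num)]

lemma vol_cell0_ne_top : volume (cell 0) ≠ ⊤ := by
  refine ne_top_of_le_ne_top ?_ (measure_mono cell_subset_Tri)
  exact ne_top_of_le_ne_top (by norm_num) vol_Tri_le_one

lemma vol_cell0_toReal_le : (volume (cell 0)).toReal ≤ 1/3 := by
  have h1 : volume (cell 0) ≤ 1/3 :=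
    le_trans (measure_mono cell_zero_subset_Scell) vol_Scell_le
  calc (volume (cell 0)).toReal ≤ ((1:ℝ≥0∞)/3).toReal :=
        ENNReal.toReal_mono (by norm_num) h1
    _ = 1/3 := by norm_num [ENNReal.toReal_div]

/-- **Strict inequality between the logarithmic moment generating functions** (inequality
(4.2)): if `c` is not a.e. constant on `𝕋₁`, then for every `θ > 0`
`∫_{𝕋₁} e^{θc} + 2/3 − 3∫_{𝕋₁} e^{θc/3} > 0`; equivalently `Λ(θ/3) < Λ̄(θ)`. -/
theorem lambda_third_lt_lambdaBar
    (c : ℂ → ℝ) (hc_meas : Measurable c) (hc_nonneg : ∀ x, 0 ≤ c x)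
    (hc_bdd : BddAbove (c '' Tri))
    (hnc : ¬ ∃ r : ℝ, ∀ᵐ x ∂(volume.restrict (cell 0)), c x = r) :
    ∀ θ : ℝ, 0 < θ →
      (0 < (∫ x in cell 0, Real.exp (θ * c x)) + 2 / 3
          - 3 * ∫ x in cell 0, Real.exp (θ * c x / 3)) ∧
        Lambda c (θ / 3) < LambdaBar c θ := by
  intro θ hθ
  have hsubT : cell 0 ⊆ Tri := cell_subset_Tri
  set ν := volume.restrict (cell 0) with hν
  have hν_le : ν ≤ volume.restrict Tri := Measure.restrict_mono hsubT le_rfl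
  obtain ⟨M, hM⟩ := hc_bdd
  have hcM : ∀ x ∈ Tri, c x ≤ M := fun x hx => hM ⟨x, hx, rfl⟩
  have hTri_fin : volume Tri < ⊤ := lt_of_le_of_lt vol_Tri_le_one ENNReal.one_lt_top
  have hmeas1 : AEStronglyMeasurable (fun x => Real.exp (θ * c x)) (volume.restrict Tri) :=
    (Real.measurable_exp.comp (measurable_const.mul hc_meas)).aestronglyMeasurable
  have hmeas3 : AEStronglyMeasurable (fun x => Real.exp (θ * c x / 3)) (volume.restrict Tri) :=
    (Real.measurable_exp.comp ((measurable_const.mul hc_meas).div_const 3)).aestronglyMeasurable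
  have hbound1 : ∀ᵐ x ∂volume.restrict Tri, ‖Real.exp (θ * c x)‖ ≤ Real.exp (θ * M) := by
    filter_upwards [ae_restrict_mem measurableSet_Tri] with x hx
    rw [Real.norm_eq_abs, Real.abs_exp]
    exact Real.exp_le_exp.2 (mul_le_mul_of_nonneg_left (hcM x hx) hθ.le)
  have hbound3 : ∀ᵐ x ∂volume.restrict Tri, ‖Real.exp (θ * c x / 3)‖ ≤ Real.exp (θ * M) := by
    filter_upwards [ae_restrict_mem measurableSet_Tri] with x hx
    rw [Real.norm_eq_abs, Real.abs_exp]
    apply Real.exp_le_exp.2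
    have h0 : 0 ≤ θ * c x := mul_nonneg hθ.le (hc_nonneg x)
    have h1 := mul_le_mul_of_nonneg_left (hcM x hx) hθ.le
    linarith
  have hint1T : Integrable (fun x => Real.exp (θ * c x)) (volume.restrict Tri) :=
    ⟨hmeas1, HasFiniteIntegral.restrict_of_bounded _ hTri_fin hbound1⟩
  have hint3T : Integrable (fun x => Real.exp (θ * c x / 3)) (volume.restrict Tri) :=
    ⟨hmeas3, HasFiniteIntegral.restrict_of_bounded _ hTri_fin hbound3⟩
  have hint1 : Integrable (fun x => Real.exp (θ * c x)) ν := hint1T.mono_measure hν_le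
  have hint3 : Integrable (fun x => Real.exp (θ * c x / 3)) ν := hint3T.mono_measure hν_le
  haveI : IsFiniteMeasure ν :=
    ⟨by rw [hν, Measure.restrict_apply_univ]; exact lt_of_le_of_lt (measure_mono hsubT) hTri_fin⟩
  have hint2 : Integrable (fun _ : ℂ => (2:ℝ)) ν := integrable_const 2
  have hcube : ∀ x : ℂ, Real.exp (θ * c x) =
      Real.exp (θ * c x / 3) * Real.exp (θ * c x / 3) * Real.exp (θ * c x / 3) := by
    intro x
    rw [← Real.exp_add, ← Real.exp_add]
    congr 1; ring
  have hy1 : ∀ x : ℂ, 1 ≤ Real.exp (θ * c x / 3) := by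
    intro x
    have h : (0:ℝ) ≤ θ * c x / 3 := div_nonneg (mul_nonneg hθ.le (hc_nonneg x)) (by norm_num)
    calc (1:ℝ) = Real.exp 0 := Real.exp_zero.symm
      _ ≤ _ := Real.exp_le_exp.2 h
  set g : ℂ → ℝ := fun x => Real.exp (θ * c x) + 2 - 3 * Real.exp (θ * c x / 3) with hg
  have hg0 : ∀ x, 0 ≤ g x := by
    intro x
    have h1 := hy1 x
    rw [hg]; dsimp only
    rw [hcube x]
    nlinarith [sq_nonneg (Real.exp (θ * c x / 3) - 1)]
  have hgeq : ∀ x, (g x = 0 ↔ c x = 0) := by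
    intro x
    have h1 := hy1 x
    constructor
    · intro h
      rw [hg] at h; dsimp only at h
      rw [hcube x] at h
      have hy : Real.exp (θ * c x / 3) ≤ 1 := by
        by_contra hgt
        push_neg at hgt
        nlinarith [mul_pos (mul_pos (sub_pos.2 hgt) (sub_pos.2 hgt))
          (show (0:ℝ) < Real.exp (θ * c x / 3) + 2 by linarith)]
      have hy' : Real.exp (θ * c x / 3) = 1 := le_antisymm hy h1
      have h0 : θ * c x / 3 = 0 := (Real.exp_eq_one_iff _).1 hy'
      have h0' : θ * c x = 0 := by linarith
      exact (mul_eq_zero.1 h0').resolve_left (ne_of_gt hθ)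
    · intro h
      rw [hg]; dsimp only; rw [h]
      norm_num
  have hintg : Integrable g ν := (hint1.add hint2).sub (hint3.const_mul 3)
  have hsupp : Function.support g = {x | c x ≠ 0} := by
    ext x
    simp only [Function.mem_support, Set.mem_setOf_eq]
    exact not_congr (hgeq x)
  have hμpos : (0:ℝ≥0∞) < ν Set.univ := by
    rw [hν, Measure.restrict_apply_univ]
    rw [pos_iff_ne_zero]
    intro h0
    refine hnc ⟨0, ?_⟩
    rw [ae_iff]
    refine le_antisymm (le_trans (measure_mono (Set.subset_univ _)) ?_) (zero_le')
    rw [Measure.restrict_apply_univ, h0]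
  have hsupp_pos : 0 < ν (Function.support g) := by
    rw [hsupp, pos_iff_ne_zero]
    intro h0
    refine hnc ⟨0, ?_⟩
    rw [ae_iff]
    simpa using h0
  have hgpos : 0 < ∫ x, g x ∂ν :=
    (integral_pos_iff_support_of_nonneg_ae (Filter.Eventually.of_forall hg0) hintg).2 hsupp_pos
  have hsplit : ∫ x, g x ∂ν = (∫ x, Real.exp (θ * c x) ∂ν)
      + 2 * (ν Set.univ).toReal - 3 * ∫ x, Real.exp (θ * c x / 3) ∂ν := by
    have hintsum : Integrable (fun x => Real.exp (θ * c x) + 2) ν := hint1.add hint2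
    have hintm : Integrable (fun x => 3 * Real.exp (θ * c x / 3)) ν := hint3.const_mul 3
    rw [hg]
    rw [integral_sub hintsum hintm, integral_add hint1 hint2,
      integral_const, integral_const_mul]
    simp only [smul_eq_mul, measureReal_def]; ring
  have hμle : (ν Set.univ).toReal ≤ 1/3 := by
    rw [hν, Measure.restrict_apply_univ]; exact vol_cell0_toReal_le
  have hμtopos : 0 < (ν Set.univ).toReal := by
    refine ENNReal.toReal_pos (ne_of_gt hμpos) ?_
    rw [hν, Measure.restrict_apply_univ]; exact vol_cell0_ne_top
  have hmain : 0 < (∫ x, Real.exp (θ * c x) ∂ν) + 2/3 - 3 * ∫ x, Real.exp (θ * c x / 3) ∂ν := by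
    have h := hgpos; rw [hsplit] at h; linarith
  refine ⟨hmain, ?_⟩
  have hpos3 : 0 < ∫ x, Real.exp (θ * c x / 3) ∂ν := by
    have h1 : (∫ _, (1:ℝ) ∂ν) ≤ ∫ x, Real.exp (θ * c x / 3) ∂ν :=
      integral_mono (integrable_const 1) hint3 (fun x => hy1 x)
    rw [integral_const, smul_eq_mul, mul_one, measureReal_def] at h1
    linarith
  simp only [Lambda, LambdaBar]
  have hcongr : (fun x : ℂ => Real.exp (θ/3 * c x)) = fun x => Real.exp (θ * c x / 3) := by
    funext x; congr 1; ring
  rw [← hν, hcongr]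
  exact Real.log_lt_log (by linarith) (by linarith)

end LoadOpt
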